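/- If L = (1+a_0)(1+a_1)···(1+a_{K-1}) satisfies ess sup_ω |L| < 1, the sequences σ_n → 0, the a_n are bounded K-periodic random variables, and ‖ξ_k‖_{L^p(Ω)} ≤ 1 for all k, then the solution X_n of X_{n+1} = X_n + a_n X_n + σ_n ξ_{n+1} with deterministic initial value X_0 satisfies ‖X_n‖_{L^p(Ω)} → 0 as n → ∞. -/

import Mathlib

open MeasureTheory ProbabilityTheory Filter Topology Finset
open scoped ENNReal NNReal

/-- Auxiliary: a nonnegative extended-real sequence satisfying the recursion
`T (n+1) ≤ ρ * T n + s n` with `ρ < 1` and `s → 0` tends to `0`. -/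
lemma rec_tendsto_zero {ρ : ℝ≥0∞} (hρ : ρ < 1) {T s : ℕ → ℝ≥0∞}
    (hT : ∀ n, T n ≠ ∞) (hs : Tendsto s atTop (𝓝 0))
    (hrec : ∀ n, T (n + 1) ≤ ρ * T n + s n) :
    Tendsto T atTop (𝓝 0) := by
  rw [ENNReal.tendsto_nhds_zero]
  intro ε hε
  rcases eq_or_ne ε ∞ with rfl | hεt
  · exact Eventually.of_forall fun n => le_top
  have hε2 : (0 : ℝ≥0∞) < ε / 2 := ENNReal.div_pos (ne_of_gt hε) (by norm_num)
  have h1ρ : (0 : ℝ≥0∞) < 1 - ρ := tsub_pos_of_lt hρ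
  have hδ : (0 : ℝ≥0∞) < (1 - ρ) * (ε / 2) :=
    ENNReal.mul_pos (ne_of_gt h1ρ) (ne_of_gt hε2)
  obtain ⟨N, hN⟩ := eventually_atTop.1 (ENNReal.tendsto_nhds_zero.mp hs _ hδ)
  have key : ∀ m, T (N + m) ≤ ρ ^ m * T N + ε / 2 := by
    intro m
    induction m with
    | zero => simpa using le_self_add
    | succ m ih =>
      have h1 : T (N + (m + 1)) ≤ ρ * T (N + m) + s (N + m) := hrec (N + m)
      have h2 : ρ * T (N + m) + s (N + m) ≤ ρ * (ρ ^ m * T N + ε / 2) + (1 - ρ) * (ε / 2) :=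
        add_le_add (mul_le_mul_right ih ρ) (hN _ (Nat.le_add_right N m))
      have h3 : ρ * (ρ ^ m * T N + ε / 2) + (1 - ρ) * (ε / 2)
          = ρ ^ (m + 1) * T N + (ρ + (1 - ρ)) * (ε / 2) := by ring
      have h4 : ρ + (1 - ρ) = 1 := add_tsub_cancel_of_le hρ.le
      calc T (N + (m + 1)) ≤ ρ * (ρ ^ m * T N + ε / 2) + (1 - ρ) * (ε / 2) := h1.trans h2
        _ = ρ ^ (m + 1) * T N + (ρ + (1 - ρ)) * (ε / 2) := h3
        _ = ρ ^ (m + 1) * T N + ε / 2 := by rw [h4, one_mul]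
  have hpow : Tendsto (fun m => ρ ^ m * T N) atTop (𝓝 0) := by
    have := ENNReal.Tendsto.mul_const (ENNReal.tendsto_pow_atTop_nhds_zero_of_lt_one hρ)
      (Or.inr (hT N))
    simpa using this
  obtain ⟨M, hM⟩ := eventually_atTop.1 (ENNReal.tendsto_nhds_zero.mp hpow _ hε2)
  refine eventually_atTop.2 ⟨N + M, fun n hn => ?_⟩
  have hn' : n = N + (n - N) := by omega
  calc T n = T (N + (n - N)) := by rw [← hn']
    _ ≤ ρ ^ (n - N) * T N + ε / 2 := key _
    _ ≤ ε / 2 + ε / 2 := add_le_add (hM (n - N) (by omega)) le_rfl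
    _ = ε := ENNReal.add_halves ε

/-- If ess sup |L| < 1 (with L = ∏_{i<K}(1+a_i)), σ_n → 0, the a_n are
bounded K-periodic random variables, and ‖ξ_k‖_{L^p} ≤ 1, then ‖X_n‖_{L^p} → 0. -/
theorem stmt0 {Ω : Type*} [MeasureSpace Ω] [IsProbabilityMeasure (ℙ : Measure Ω)]
    (p : ℝ≥0∞) (hp : 1 ≤ p) (K : ℕ) (hK : 0 < K)
    (a ξ X : ℕ → Ω → ℝ) (σ : ℕ → ℝ) (x0 : ℝ)
    (ha_meas : ∀ n, Measurable (a n)) (hξ_meas : ∀ n, Measurable (ξ n))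
    (ha_bdd : ∃ C : ℝ, ∀ n, ∀ᵐ ω, |a n ω| ≤ C)
    (ha_per : ∀ n, ∀ᵐ ω, a (n + K) ω = a n ω)
    (hσ : Tendsto σ atTop (𝓝 0))
    (hξ : ∀ k, eLpNorm (ξ k) p ℙ ≤ 1)
    (hL : eLpNorm (fun ω => ∏ i ∈ Finset.range K, (1 + a i ω)) ⊤ ℙ < 1)
    (hX0 : ∀ ω, X 0 ω = x0)
    (hX : ∀ n ω, X (n + 1) ω = (1 + a n ω) * X n ω + σ n * ξ (n + 1) ω) :
    Tendsto (fun n => eLpNorm (X n) p ℙ) atTop (𝓝 0) := by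
  classical
  obtain ⟨C0, hC0⟩ := ha_bdd
  set C : ℝ := max C0 0 with hCdef
  have hCnn : (0 : ℝ) ≤ C := le_max_right _ _
  have hC1 : (1 : ℝ) ≤ 1 + C := by linarith
  have hCpow : (0 : ℝ) ≤ (1 + C) ^ K := by positivity
  have hb_bdd : ∀ n, ∀ᵐ ω, |1 + a n ω| ≤ 1 + C := by
    intro n
    filter_upwards [hC0 n] with ω h
    have h1 : |a n ω| ≤ C := h.trans (le_max_left _ _)
    calc |1 + a n ω| ≤ |(1 : ℝ)| + |a n ω| := abs_add_le _ _
      _ ≤ 1 + C := by rw [abs_one]; linarith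
  have hball : ∀ᵐ ω, ∀ i, |1 + a i ω| ≤ 1 + C := ae_all_iff.2 hb_bdd
  -- measurability of X
  have hXmeas : ∀ n, Measurable (X n) := by
    intro n
    induction n with
    | zero =>
      have h : X 0 = fun _ => x0 := funext hX0
      rw [h]; exact measurable_const
    | succ n ih =>
      have h : X (n + 1) = fun ω => (1 + a n ω) * X n ω + σ n * ξ (n + 1) ω := funext (hX n)
      rw [h]
      exact ((measurable_const.add (ha_meas n)).mul ih).add
        (measurable_const.mul (hξ_meas (n + 1)))
  -- multiplication bound for eLpNorm
  have hmul : ∀ (g f : Ω → ℝ) (D : ℝ), 0 ≤ D → (∀ᵐ ω, |g ω| ≤ D) →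
      eLpNorm (fun ω => g ω * f ω) p ℙ ≤ ENNReal.ofReal D * eLpNorm f p ℙ := by
    intro g f D hD hg
    have h1 : eLpNorm (fun ω => g ω * f ω) p ℙ ≤ eLpNorm (fun ω => D * f ω) p ℙ := by
      apply eLpNorm_mono_ae
      filter_upwards [hg] with ω h
      rw [Real.norm_eq_abs, Real.norm_eq_abs, abs_mul, abs_mul, abs_of_nonneg hD]
      exact mul_le_mul_of_nonneg_right h (abs_nonneg _)
    refine h1.trans_eq ?_
    have h2 : (fun ω => D * f ω) = D • f := by
      funext ω; simp [Pi.smul_apply, smul_eq_mul]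
    rw [h2, eLpNorm_const_smul]
    congr 1
    rw [← ofReal_norm_eq_enorm, Real.norm_eq_abs, abs_of_nonneg hD]
  -- explicit solution formula
  have hform : ∀ n s ω, X (n + s) ω =
      (∏ j ∈ range s, (1 + a (n + j) ω)) * X n ω +
      ∑ j ∈ range s, (∏ i ∈ Finset.Ico (j + 1) s, (1 + a (n + i) ω)) *
        (σ (n + j) * ξ (n + j + 1) ω) := by
    intro n s
    induction s with
    | zero => intro ω; simp
    | succ s ih =>
      intro ω
      have e1 : n + (s + 1) = n + s + 1 := by omega
      rw [e1, hX, ih ω, Finset.prod_range_succ, Finset.sum_range_succ]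
      rw [Finset.Ico_self, Finset.prod_empty, one_mul]
      have e2 : ∀ j ∈ range s,
          (∏ i ∈ Finset.Ico (j + 1) (s + 1), (1 + a (n + i) ω)) *
            (σ (n + j) * ξ (n + j + 1) ω)
          = (1 + a (n + s) ω) * ((∏ i ∈ Finset.Ico (j + 1) s, (1 + a (n + i) ω)) *
            (σ (n + j) * ξ (n + j + 1) ω)) := by
        intro j hj
        rw [Finset.prod_Ico_succ_top (Nat.succ_le_of_lt (Finset.mem_range.1 hj))]
        ring
      rw [Finset.sum_congr rfl e2, ← Finset.mul_sum]
      ring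
  -- main eLpNorm bound over a stretch of s ≤ K steps
  have hbound : ∀ n s, s ≤ K → ∀ D : ℝ, 0 ≤ D →
      (∀ᵐ ω, |∏ j ∈ range s, (1 + a (n + j) ω)| ≤ D) →
      eLpNorm (X (n + s)) p ℙ ≤ ENNReal.ofReal D * eLpNorm (X n) p ℙ +
        ∑ j ∈ range s, ENNReal.ofReal ((1 + C) ^ K) * ENNReal.ofReal |σ (n + j)| := by
    intro n s hsK D hD hDae
    set F : ℕ → Ω → ℝ := fun j ω =>
      (∏ i ∈ Finset.Ico (j + 1) s, (1 + a (n + i) ω)) * (σ (n + j) * ξ (n + j + 1) ω)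
      with hFdef
    set A : Ω → ℝ := fun ω => (∏ j ∈ range s, (1 + a (n + j) ω)) * X n ω with hAdef
    have hXe : X (n + s) = A + ∑ j ∈ range s, F j := by
      funext ω
      rw [hform n s ω]
      simp [hAdef, hFdef, Finset.sum_apply]
    have hprodmeas : Measurable fun ω => ∏ j ∈ range s, (1 + a (n + j) ω) :=
      Finset.measurable_prod _ fun i _ => measurable_const.add (ha_meas (n + i))
    have hAmeas : AEStronglyMeasurable A ℙ :=
      (hprodmeas.mul (hXmeas n)).aestronglyMeasurable
    have hFmeas : ∀ j, AEStronglyMeasurable (F j) ℙ := by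
      intro j
      exact ((Finset.measurable_prod _ fun i _ => measurable_const.add (ha_meas (n + i))).mul
        (measurable_const.mul (hξ_meas (n + j + 1)))).aestronglyMeasurable
    have hsummeas : AEStronglyMeasurable (∑ j ∈ range s, F j) ℙ := by
      have h := aestronglyMeasurable_sum (range s) fun j _ => hFmeas j
      convert h using 1
    rw [hXe]
    refine (eLpNorm_add_le hAmeas hsummeas hp).trans (add_le_add ?_ ?_)
    · exact hmul _ _ D hD hDae
    · refine (eLpNorm_sum_le (fun j _ => hFmeas j) hp).trans ?_
      refine Finset.sum_le_sum fun j hj => ?_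
      have hprodbd : ∀ᵐ ω, |∏ i ∈ Finset.Ico (j + 1) s, (1 + a (n + i) ω)| ≤ (1 + C) ^ K := by
        filter_upwards [hball] with ω h
        calc |∏ i ∈ Finset.Ico (j + 1) s, (1 + a (n + i) ω)|
            = ∏ i ∈ Finset.Ico (j + 1) s, |1 + a (n + i) ω| := Finset.abs_prod _ _
          _ ≤ ∏ _i ∈ Finset.Ico (j + 1) s, (1 + C) :=
              Finset.prod_le_prod (fun i _ => abs_nonneg _) (fun i _ => h (n + i))
          _ = (1 + C) ^ (Finset.Ico (j + 1) s).card := (Finset.prod_const _)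
          _ ≤ (1 + C) ^ K := by
              apply pow_le_pow_right₀ hC1
              rw [Nat.card_Ico]; omega
      have h1 : eLpNorm (F j) p ℙ ≤ ENNReal.ofReal ((1 + C) ^ K) *
          eLpNorm (fun ω => σ (n + j) * ξ (n + j + 1) ω) p ℙ :=
        hmul _ _ _ hCpow hprodbd
      have h2 : eLpNorm (fun ω => σ (n + j) * ξ (n + j + 1) ω) p ℙ ≤
          ENNReal.ofReal |σ (n + j)| := by
        have := hmul (fun _ => σ (n + j)) (ξ (n + j + 1)) |σ (n + j)| (abs_nonneg _)
          (Eventually.of_forall fun ω => le_refl _)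
        refine this.trans ?_
        calc ENNReal.ofReal |σ (n + j)| * eLpNorm (ξ (n + j + 1)) p ℙ
            ≤ ENNReal.ofReal |σ (n + j)| * 1 := mul_le_mul_right (hξ _) _
          _ = ENNReal.ofReal |σ (n + j)| := mul_one _
      exact h1.trans (mul_le_mul_right h2 _)
  -- periodicity: a (m*K + j) =ᵐ a j
  have hper : ∀ m j, a (m * K + j) =ᵐ[ℙ] a j := by
    intro m
    induction m with
    | zero => intro j; rw [show 0 * K + j = j by omega]
    | succ m ih =>
      intro j
      have e : (m + 1) * K + j = m * K + j + K := by ring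
      rw [e]
      exact Filter.EventuallyEq.trans (ha_per (m * K + j) : a (m * K + j + K) =ᵐ[ℙ] a (m * K + j)) (ih j)
  have hLblock : ∀ m, (fun ω => ∏ j ∈ range K, (1 + a (m * K + j) ω)) =ᵐ[ℙ]
      (fun ω => ∏ i ∈ range K, (1 + a i ω)) := by
    intro m
    have h : ∀ᵐ ω, ∀ j, a (m * K + j) ω = a j ω := ae_all_iff.2 fun j => hper m j
    filter_upwards [h] with ω h
    exact Finset.prod_congr rfl fun j _ => by rw [h j]
  -- the contraction factor
  set ρ : ℝ≥0∞ := eLpNorm (fun ω => ∏ i ∈ range K, (1 + a i ω)) ⊤ ℙ with hρdef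
  have hρ1 : ρ < 1 := hL
  have hρt : ρ ≠ ∞ := hρ1.trans (by norm_num) |>.ne
  set r : ℝ := ρ.toReal with hrdef
  have hrnn : (0 : ℝ) ≤ r := ENNReal.toReal_nonneg
  have hr1 : r < 1 := by
    have h := (ENNReal.toReal_lt_toReal hρt (by norm_num : (1 : ℝ≥0∞) ≠ ∞)).2 hρ1
    simpa using h
  have hρr : ρ = ENNReal.ofReal r := (ENNReal.ofReal_toReal hρt).symm
  have hLae : ∀ᵐ ω, |∏ i ∈ range K, (1 + a i ω)| ≤ r := by
    have h := enorm_ae_le_eLpNormEssSup (fun ω => ∏ i ∈ range K, (1 + a i ω)) ℙ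
    filter_upwards [h] with ω h
    rw [← eLpNorm_exponent_top, ← hρdef, hρr, ← ofReal_norm_eq_enorm,
      Real.norm_eq_abs] at h
    exact (ENNReal.ofReal_le_ofReal_iff hrnn).1 h
  have hblockae : ∀ m, ∀ᵐ ω, |∏ j ∈ range K, (1 + a (m * K + j) ω)| ≤ r := by
    intro m
    filter_upwards [hLblock m, hLae] with ω h1 h2
    rw [h1]; exact h2
  -- constants
  set E : ℝ≥0∞ := ENNReal.ofReal ((1 + C) ^ K) with hEdef
  have hEt : E ≠ ∞ := ENNReal.ofReal_ne_top
  set T : ℕ → ℝ≥0∞ := fun m => eLpNorm (X (m * K)) p ℙ with hTdef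
  set c : ℕ → ℝ≥0∞ := fun m => ∑ j ∈ range K, E * ENNReal.ofReal |σ (m * K + j)| with hcdef
  -- finiteness
  have hfin : ∀ n, eLpNorm (X n) p ℙ ≠ ∞ := by
    intro n
    induction n with
    | zero =>
      have h0 : ∀ᵐ ω, ‖X 0 ω‖ ≤ |x0| := Eventually.of_forall fun ω => by
        rw [hX0 ω, Real.norm_eq_abs]
      have h := eLpNorm_le_of_ae_bound (p := p) h0
      rw [measure_univ, ENNReal.one_rpow, one_mul] at h
      exact ne_top_of_le_ne_top ENNReal.ofReal_ne_top h
    | succ n ih =>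
      have hae : ∀ᵐ ω, |∏ j ∈ range 1, (1 + a (n + j) ω)| ≤ 1 + C := by
        filter_upwards [hb_bdd n] with ω h
        simpa using h
      have h := hbound n 1 hK (1 + C) (by linarith) hae
      refine ne_top_of_le_ne_top ?_ h
      exact ENNReal.add_ne_top.2 ⟨ENNReal.mul_ne_top ENNReal.ofReal_ne_top ih,
        ENNReal.sum_ne_top.2 fun j _ => ENNReal.mul_ne_top hEt ENNReal.ofReal_ne_top⟩
  -- block recursion
  have hrecT : ∀ m, T (m + 1) ≤ ENNReal.ofReal r * T m + c m := by
    intro m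
    have h := hbound (m * K) K le_rfl r hrnn (hblockae m)
    have e : (m + 1) * K = m * K + K := by ring
    rw [hTdef]
    simpa [e, hcdef, hEdef] using h
  -- c tends to 0
  have hc : Tendsto c atTop (𝓝 0) := by
    have hterm : ∀ j ∈ range K, Tendsto (fun m => E * ENNReal.ofReal |σ (m * K + j)|)
        atTop (𝓝 0) := by
      intro j _
      have hg : Tendsto (fun m => m * K + j) atTop atTop := by
        apply tendsto_atTop_atTop.2
        intro N
        exact ⟨N, fun m hm => le_trans (le_trans hm (Nat.le_mul_of_pos_right _ hK))
          (Nat.le_add_right _ _)⟩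
      have h1 : Tendsto (fun m => σ (m * K + j)) atTop (𝓝 0) := hσ.comp hg
      have h2 : Tendsto (fun m => |σ (m * K + j)|) atTop (𝓝 0) := by
        simpa using h1.abs
      have h3 : Tendsto (fun m => ENNReal.ofReal |σ (m * K + j)|) atTop (𝓝 0) := by
        simpa using ENNReal.tendsto_ofReal h2
      simpa using ENNReal.Tendsto.const_mul h3 (Or.inr hEt)
    have := tendsto_finset_sum (range K) hterm
    simpa [hcdef] using this
  -- T tends to 0
  have hT0 : Tendsto T atTop (𝓝 0) :=
    rec_tendsto_zero (ENNReal.ofReal_lt_one.2 hr1) (fun m => hfin (m * K)) hc hrecT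
  -- upper bound for all n
  have hub : ∀ n, eLpNorm (X n) p ℙ ≤ E * T (n / K) + c (n / K) := by
    intro n
    have hsle : n % K ≤ K := le_of_lt (Nat.mod_lt n hK)
    have hae : ∀ᵐ ω, |∏ j ∈ range (n % K), (1 + a (n / K * K + j) ω)| ≤ (1 + C) ^ K := by
      filter_upwards [hball] with ω h
      calc |∏ j ∈ range (n % K), (1 + a (n / K * K + j) ω)|
          = ∏ j ∈ range (n % K), |1 + a (n / K * K + j) ω| := Finset.abs_prod _ _
        _ ≤ ∏ _j ∈ range (n % K), (1 + C) :=
            Finset.prod_le_prod (fun i _ => abs_nonneg _) (fun i _ => h _)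
        _ = (1 + C) ^ (n % K) := by rw [Finset.prod_const, Finset.card_range]
        _ ≤ (1 + C) ^ K := pow_le_pow_right₀ hC1 hsle
    have h := hbound (n / K * K) (n % K) hsle ((1 + C) ^ K) hCpow hae
    rw [Nat.div_add_mod'] at h
    refine h.trans (add_le_add le_rfl ?_)
    refine Finset.sum_le_sum_of_subset ?_
    exact Finset.range_subset_range.2 hsle
  -- conclude
  have hW : Tendsto (fun m => E * T m + c m) atTop (𝓝 0) := by
    have h1 : Tendsto (fun m => E * T m) atTop (𝓝 0) := by
      simpa using ENNReal.Tendsto.const_mul hT0 (Or.inr hEt)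
    simpa using h1.add hc
  have hdiv : Tendsto (fun n => n / K) atTop atTop := by
    apply tendsto_atTop_atTop.2
    intro N
    exact ⟨N * K, fun n hn => (Nat.le_div_iff_mul_le hK).2 hn⟩
  exact tendsto_of_tendsto_of_tendsto_of_le_of_le tendsto_const_nhds (hW.comp hdiv)
    (fun n => zero_le) hub
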